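/- With û defined as the sum of ŝ over 1-dimensional subspaces s ⊆ u (where the ŝ satisfy ‖ŝ‖² = [n]-1, ⟨ŝ,t̂⟩ = -1 for s ≠ t, Σ ŝ = 0), for a subspace u of dimension i one has ‖û‖² = q^i [i][n-i]. -/

import Mathlib

/-- The Gaussian number `[m] = (q^m - 1)/(q - 1)` as a real number. -/
noncomputable def gaussR (q m : ℕ) : ℝ := ((q : ℝ) ^ m - 1) / ((q : ℝ) - 1)

/-- The vector `û ∈ E` attached to a subspace `u`: the sum of `ŝ` over all
one-dimensional subspaces `s ⊆ u`. -/
noncomputable def uhat {F V : Type*} [Field F] [AddCommGroup V] [Module F V]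
    {E : Type*} [NormedAddCommGroup E] [InnerProductSpace ℝ E]
    (shat : {s : Submodule F V // Module.finrank F s = 1} → E)
    (u : Submodule F V) : E :=
  ∑ᶠ (s : {s : Submodule F V // Module.finrank F s = 1}) (_ : s.1 ≤ u), shat s

open Finset Module in
/-- Counting lemma: the number of 1-dim subspaces of `u` times `q-1` is `q^dim u - 1`. -/
lemma aux_count {F V : Type*} [Field F] [Fintype F] [AddCommGroup V] [Module F V]
    [FiniteDimensional F V] (u : Submodule F V) :
    Nat.card {s : {s : Submodule F V // Module.finrank F s = 1} // s.1 ≤ u}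
      * (Fintype.card F - 1) = Fintype.card F ^ Module.finrank F u - 1 := by
  classical
  haveI : Finite V := Module.finite_of_finite F
  haveI : Fintype V := Fintype.ofFinite V
  haveI : Finite (Submodule F V) := Finite.of_injective _ SetLike.coe_injective
  haveI : Fintype {s : Submodule F V // Module.finrank F s = 1} := Fintype.ofFinite _
  rw [Nat.card_eq_fintype_card, Fintype.card_subtype]
  set q := Fintype.card F with hq
  -- the set of nonzero vectors of u
  set A : Finset V := Set.toFinset ((u : Set V) \ {0}) with hA
  set t : Finset (Submodule F V) :=
    Finset.univ.filter (fun s => Module.finrank F s = 1 ∧ s ≤ u) with ht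
  have hmem : ∀ v ∈ A, Submodule.span F {v} ∈ t := by
    intro v hv
    simp only [hA, Set.mem_toFinset, Set.mem_diff, Set.mem_singleton_iff] at hv
    simp only [ht, mem_filter, mem_univ, true_and]
    exact ⟨finrank_span_singleton hv.2, (Submodule.span_singleton_le_iff_mem _ _).2 hv.1⟩
  have hcard := Finset.card_eq_sum_card_fiberwise hmem
  -- each fiber has q - 1 elements
  have hfib : ∀ b ∈ t, (A.filter (fun v => Submodule.span F {v} = b)).card = q - 1 := by
    intro b hb
    simp only [ht, mem_filter, mem_univ, true_and] at hb
    have : (A.filter (fun v => Submodule.span F {v} = b)) = Set.toFinset ((b : Set V) \ {0}) := by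
      ext v
      simp only [mem_filter, hA, Set.mem_toFinset, Set.mem_diff, Set.mem_singleton_iff,
        SetLike.mem_coe]
      constructor
      · rintro ⟨⟨hv, hv0⟩, rfl⟩
        exact ⟨Submodule.mem_span_singleton_self v, hv0⟩
      · rintro ⟨hv, hv0⟩
        have hle : Submodule.span F {v} ≤ b := (Submodule.span_singleton_le_iff_mem _ _).2 hv
        have : Submodule.span F {v} = b := Submodule.eq_of_le_of_finrank_eq hle
          (by rw [finrank_span_singleton hv0, hb.1])
        exact ⟨⟨hb.2 hv, hv0⟩, this⟩
    rw [this]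
    rw [Set.toFinset_diff, Set.toFinset_singleton, ← Finset.erase_eq,
      Finset.card_erase_of_mem (by simp [Set.mem_toFinset]), Set.toFinset_card]
    have : Fintype.card ((b : Set V)) = q ^ Module.finrank F b := by
      rw [hq]; exact card_eq_pow_finrank
    rw [this, hb.1, pow_one]
  have hcardA : A.card = q ^ Module.finrank F u - 1 := by
    rw [hA, Set.toFinset_diff, Set.toFinset_singleton, ← Finset.erase_eq,
      Finset.card_erase_of_mem (by simp [Set.mem_toFinset]), Set.toFinset_card]
    congr 1
    rw [hq]; exact card_eq_pow_finrank
  rw [Finset.sum_congr rfl hfib, Finset.sum_const, smul_eq_mul] at hcard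
  rw [← hcardA, hcard]
  congr 1
  -- cards of the two filtered sets agree
  apply Finset.card_bij (fun (s : {s : Submodule F V // Module.finrank F s = 1}) _ => s.1)
  · intro s hs
    simp only [mem_filter, mem_univ, true_and] at hs
    simp only [ht, mem_filter, mem_univ, true_and]
    exact ⟨s.2, hs⟩
  · intro s hs s' hs' h; exact Subtype.ext h
  · intro b hb; simp only [ht, mem_filter, mem_univ, true_and] at hb
    exact ⟨⟨b, hb.1⟩, by simp [mem_filter, hb.2], rfl⟩

theorem stmt10 {F V : Type*} [Field F] [Fintype F] [AddCommGroup V] [Module F V]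
    [FiniteDimensional F V] {q n : ℕ} (hq : Fintype.card F = q)
    (hn : Module.finrank F V = n)
    {E : Type*} [NormedAddCommGroup E] [InnerProductSpace ℝ E]
    (shat : {s : Submodule F V // Module.finrank F s = 1} → E)
    (hspan : Submodule.span ℝ (Set.range shat) = ⊤)
    (hnorm : ∀ s, ‖shat s‖ ^ 2 = gaussR q n - 1)
    (hinner : ∀ s t, s ≠ t → (inner ℝ (shat s) (shat t) : ℝ) = -1)
    (hsum : ∑ᶠ s, shat s = 0)
    (u : Submodule F V) {i : ℕ} (hu : Module.finrank F u = i) :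
    ‖uhat shat u‖ ^ 2 = (q : ℝ) ^ i * gaussR q i * gaussR q (n - i) := by
  classical
  subst hq hn hu
  haveI : Finite V := Module.finite_of_finite F
  haveI : Fintype V := Fintype.ofFinite V
  haveI : Finite (Submodule F V) := Finite.of_injective _ SetLike.coe_injective
  haveI : Fintype {s : Submodule F V // Module.finrank F s = 1} := Fintype.ofFinite _
  set q := Fintype.card F with hq
  set n := Module.finrank F V with hn
  set i := Module.finrank F u with hi
  have hq2 : 1 < q := Fintype.one_lt_card
  have hin : i ≤ n := Submodule.finrank_le u
  set T : Finset {s : Submodule F V // Module.finrank F s = 1} :=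
    Finset.univ.filter (fun s => s.1 ≤ u) with hT
  have huhat : uhat shat u = ∑ s ∈ T, shat s := by
    rw [uhat, finsum_eq_sum_of_fintype, hT, Finset.sum_filter]
    congr 1; ext s; exact finsum_eq_if
  -- cardinality of T
  have hc : T.card * (q - 1) = q ^ i - 1 := by
    have h := aux_count u
    rwa [Nat.card_eq_fintype_card, Fintype.card_subtype] at h
  have hq1R : (1 : ℝ) < (q : ℝ) := by exact_mod_cast hq2
  have hqne : (q : ℝ) - 1 ≠ 0 := by linarith
  set c : ℝ := (T.card : ℝ) with hcdef
  have hcR : c * ((q : ℝ) - 1) = (q : ℝ) ^ i - 1 := by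
    have h1 : 1 ≤ q := hq2.le
    have h2 : 1 ≤ q ^ i := Nat.one_le_pow _ _ (lt_of_lt_of_le one_pos h1)
    have h := congrArg (Nat.cast : ℕ → ℝ) hc
    rw [Nat.cast_mul, Nat.cast_sub h1, Nat.cast_sub h2, Nat.cast_pow, Nat.cast_one] at h
    exact h
  have hcg : c = gaussR q i := by
    rw [gaussR, eq_div_iff hqne]; exact hcR
  -- the norm computation
  have hsq : ‖uhat shat u‖ ^ 2 = c * (gaussR q n - c) := by
    rw [huhat, ← real_inner_self_eq_norm_sq, sum_inner]
    have hterm : ∀ s ∈ T, (inner ℝ (shat s) (∑ t ∈ T, shat t) : ℝ) = gaussR q n - c := by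
      intro s hs
      rw [inner_sum]
      have : ∀ t ∈ T, (inner ℝ (shat s) (shat t) : ℝ)
          = (if s = t then gaussR q n else 0) - 1 := by
        intro t _
        by_cases h : s = t
        · subst h
          rw [if_pos rfl, real_inner_self_eq_norm_sq, hnorm]
        · rw [if_neg h, hinner s t h]; ring
      rw [Finset.sum_congr rfl this, Finset.sum_sub_distrib,
        Finset.sum_ite_eq T s (fun _ => gaussR q n), if_pos hs, Finset.sum_const,
        nsmul_eq_mul, mul_one]
    rw [Finset.sum_congr rfl hterm, Finset.sum_const, nsmul_eq_mul]
  have hpow : (q : ℝ) ^ i * (q : ℝ) ^ (n - i) = (q : ℝ) ^ n := by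
    rw [← pow_add, Nat.add_sub_cancel' hin]
  have hkey : gaussR q n - gaussR q i = (q : ℝ) ^ i * gaussR q (n - i) := by
    have h3 : (q : ℝ) ^ i * ((q : ℝ) ^ (n - i) - 1) = (q : ℝ) ^ n - (q : ℝ) ^ i := by
      rw [mul_sub, hpow, mul_one]
    rw [gaussR, gaussR, gaussR, ← sub_div, ← mul_div_assoc, h3]
    congr 1
    ring
  rw [hsq, hcg, hkey]
  ring
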